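/- Let G(d,h) = ℤ^V/Λ be the sandpile group of the d-regular tree of depth h (d ≥ 3, h ≥ 1), where Λ is spanned by the rows δᵢ of the reduced Laplacian with δᵢ = d·xᵢ − x_{p(i)} − Σ_{j child of i} x_j for non-leaves i ≠ root, δ₀ = d·x₀ − Σ_{j child of 0} x_j, and δ_ℓ = d·x_ℓ − x_{p(ℓ)} for leaves ℓ. Then the order of the image of the root generator x₀ in G(d,h) equals d·(d−1)^h. -/

import Mathlib

namespace SandpileTree

/-- Vertices of the rooted `d`-regular tree of depth `h`: a depth `n ≤ h` together with
the path of steps from the root, padded with value `0` beyond the depth.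
The step out of the root has `d` choices; each later step has `d - 1` choices. -/
def Vert (d h : ℕ) : Type :=
  {p : Fin (h + 1) × (Fin h → Fin d) //
    (∀ i : Fin h, (p.1 : ℕ) ≤ (i : ℕ) → (p.2 i : ℕ) = 0) ∧
    (∀ i : Fin h, 0 < (i : ℕ) → (i : ℕ) < (p.1 : ℕ) → (p.2 i : ℕ) < d - 1)}

instance (d h : ℕ) : DecidableEq (Vert d h) := by unfold Vert; infer_instance
instance (d h : ℕ) : Fintype (Vert d h) := by unfold Vert; infer_instance

/-- The depth (distance from the root) of a vertex. -/
def depth {d h : ℕ} (v : Vert d h) : ℕ := (v.1.1 : ℕ)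

/-- The root of the tree. -/
def root (d h : ℕ) (hd : 0 < d) : Vert d h :=
  ⟨(0, fun _ => ⟨0, hd⟩), by constructor <;> intro i <;> simp⟩

/-- `IsParent i j` means that `i` is the parent of `j` in the rooted tree. -/
def IsParent {d h : ℕ} (i j : Vert d h) : Prop :=
  depth j = depth i + 1 ∧ ∀ k : Fin h, (k : ℕ) < depth i → j.1.2 k = i.1.2 k

instance {d h : ℕ} (i j : Vert d h) : Decidable (IsParent i j) := by
  unfold IsParent; infer_instance

/-- The row of the reduced Laplacian of the augmented tree corresponding to vertex `i`:
`δ i = d·x_i − x_{parent i} − ∑_{j child of i} x_j` (no parent term for the root, and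
no children terms for the leaves, which are attached to the sink by `d-1` edges). -/
def delta (d h : ℕ) (i : Vert d h) : Vert d h → ℤ :=
  (d : ℤ) • Pi.single i 1
    - ∑ j ∈ Finset.univ.filter (fun j => IsParent j i), Pi.single j 1
    - ∑ j ∈ Finset.univ.filter (fun j => IsParent i j), Pi.single j 1

/-- The lattice `Λ ⊆ ℤ^V` spanned by the rows of the reduced Laplacian. -/
def lat (d h : ℕ) : AddSubgroup (Vert d h → ℤ) :=
  AddSubgroup.closure (Set.range (delta d h))

/-- The sandpile group `G(d,h) = ℤ^V / Λ` of the `d`-regular tree of depth `h`. -/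
abbrev SG (d h : ℕ) : Type := (Vert d h → ℤ) ⧸ lat d h

/-- The image `x̄ᵢ` of the standard basis vector `xᵢ` in the sandpile group. -/
def xbar (d h : ℕ) (i : Vert d h) : SG d h :=
  QuotientAddGroup.mk (Pi.single i 1)

/-- `θ(d,n) = ((d-1)^n - 1)/(d-2)`. -/
def theta (d n : ℕ) : ℕ := ((d - 1) ^ n - 1) / (d - 2)

-- Auxiliary lemmas

variable {d h : ℕ}

open Finset

lemma depth_le (v : Vert d h) : depth v ≤ h := by
  have := v.1.1.isLt; unfold depth; omega

lemma eq_root_iff (hd : 0 < d) (v : Vert d h) : v = root d h hd ↔ depth v = 0 := by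
  constructor
  · rintro rfl; rfl
  · intro h0
    apply Subtype.ext
    apply Prod.ext
    · exact Fin.ext h0
    · funext i
      refine Fin.ext (v.2.1 i ?_)
      have : (v.1.1 : ℕ) = depth v := rfl
      omega

def parent (hd : 0 < d) (v : Vert d h) : Vert d h :=
  ⟨(⟨depth v - 1, by have := v.1.1.isLt; unfold depth at *; omega⟩,
    fun i => if (i : ℕ) + 1 < depth v then v.1.2 i else ⟨0, hd⟩),
   by
     constructor
     · intro i hi
       simp only at hi ⊢
       rw [if_neg (by omega)]
     · intro i hi1 hi2
       simp only at hi2 ⊢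
       rw [if_pos (by omega)]
       refine v.2.2 i hi1 ?_
       have : (v.1.1 : ℕ) = depth v := rfl
       omega⟩

lemma depth_parent (hd : 0 < d) (v : Vert d h) : depth (parent hd v) = depth v - 1 := rfl

lemma isParent_parent (hd : 0 < d) (v : Vert d h) (hv : 1 ≤ depth v) :
    IsParent (parent hd v) v := by
  constructor
  · rw [depth_parent]; omega
  · intro k hk
    rw [depth_parent] at hk
    show v.1.2 k = if (k : ℕ) + 1 < depth v then v.1.2 k else _
    rw [if_pos (by omega)]

lemma eq_parent_of_isParent (hd : 0 < d) {i v : Vert d h} (hp : IsParent i v) :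
    i = parent hd v := by
  obtain ⟨h1, h2⟩ := hp
  apply Subtype.ext
  apply Prod.ext
  · exact Fin.ext (by show (i.1.1 : ℕ) = depth v - 1; unfold depth at h1 ⊢; omega)
  · funext k
    show i.1.2 k = if (k : ℕ) + 1 < depth v then v.1.2 k else ⟨0, hd⟩
    by_cases hk : (k : ℕ) + 1 < depth v
    · rw [if_pos hk]
      exact (h2 k (by omega)).symm
    · rw [if_neg hk]
      refine Fin.ext (i.2.1 k ?_)
      have : (i.1.1 : ℕ) = depth i := rfl
      omega

lemma parents_filter_empty (v : Vert d h) (h0 : depth v = 0) :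
    univ.filter (fun i : Vert d h => IsParent i v) = ∅ := by
  ext i
  simp only [mem_filter, mem_univ, true_and, Finset.notMem_empty, iff_false]
  intro hp
  have := hp.1
  omega

lemma parents_filter_singleton (hd : 0 < d) (v : Vert d h) (hv : 1 ≤ depth v) :
    univ.filter (fun i : Vert d h => IsParent i v) = {parent hd v} := by
  ext i
  simp only [mem_filter, mem_univ, true_and, Finset.mem_singleton]
  constructor
  · exact eq_parent_of_isParent hd
  · rintro rfl; exact isParent_parent hd v hv

lemma depth_isParent {i j : Vert d h} (hp : IsParent i j) : depth j = depth i + 1 := hp.1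

def child (hd : 0 < d) (v : Vert d h) (hvh : depth v < h) (s : Fin d)
    (hs : depth v = 0 ∨ (s : ℕ) < d - 1) : Vert d h :=
  ⟨(⟨depth v + 1, Nat.succ_lt_succ hvh⟩,
    fun i => if (i : ℕ) = depth v then s else v.1.2 i),
   by
     constructor
     · intro i hi
       simp only at hi ⊢
       rw [if_neg (by omega)]
       refine v.2.1 i ?_
       have : (v.1.1 : ℕ) = depth v := rfl
       omega
     · intro i hi1 hi2
       simp only at hi2 ⊢
       by_cases hie : (i : ℕ) = depth v
       · rw [if_pos hie]
         rcases hs with hs | hs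
         · rw [hie] at hi1
           omega
         · exact hs
       · rw [if_neg hie]
         refine v.2.2 i hi1 ?_
         have : (v.1.1 : ℕ) = depth v := rfl
         omega⟩

lemma depth_child (hd : 0 < d) (v : Vert d h) (hvh : depth v < h) (s : Fin d) (hs) :
    depth (child hd v hvh s hs) = depth v + 1 := rfl

lemma isParent_child (hd : 0 < d) (v : Vert d h) (hvh : depth v < h) (s : Fin d) (hs) :
    IsParent v (child hd v hvh s hs) := by
  constructor
  · rfl
  · intro k hk
    show (if (k : ℕ) = depth v then s else v.1.2 k) = v.1.2 k
    rw [if_neg (by omega)]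

lemma child_step (hd : 0 < d) (v : Vert d h) (hvh : depth v < h) (s : Fin d) (hs) :
    (child hd v hvh s hs).1.2 ⟨depth v, hvh⟩ = s := by
  show (if _ then s else _) = s
  rw [if_pos rfl]

lemma step_lt_of_isParent {v j : Vert d h} (hp : IsParent v j) (hvh : depth v < h)
    (hv : 1 ≤ depth v) : ((j.1.2 ⟨depth v, hvh⟩ : Fin d) : ℕ) < d - 1 := by
  refine j.2.2 ⟨depth v, hvh⟩ (by show 0 < depth v; omega) ?_
  have : (j.1.1 : ℕ) = depth j := rfl
  have := hp.1
  simp only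
  omega

lemma eq_child_of_isParent (hd : 0 < d) {v j : Vert d h} (hp : IsParent v j)
    (hvh : depth v < h) (hs) :
    j = child hd v hvh (j.1.2 ⟨depth v, hvh⟩) hs := by
  obtain ⟨h1, h2⟩ := hp
  apply Subtype.ext
  apply Prod.ext
  · refine Fin.ext ?_
    show depth j = depth v + 1
    omega
  · funext k
    show j.1.2 k = if (k : ℕ) = depth v then j.1.2 ⟨depth v, hvh⟩ else v.1.2 k
    by_cases hk : (k : ℕ) = depth v
    · rw [if_pos hk]
      have hkk : k = ⟨depth v, hvh⟩ := Fin.ext hk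
      rw [hkk]
    · rw [if_neg hk]
      by_cases hk2 : (k : ℕ) < depth v
      · exact h2 k hk2
      · refine Fin.ext ?_
        have e1 : (j.1.2 k : ℕ) = 0 := by
          refine j.2.1 k ?_
          have : (j.1.1 : ℕ) = depth j := rfl
          omega
        have e2 : (v.1.2 k : ℕ) = 0 := by
          refine v.2.1 k ?_
          have : (v.1.1 : ℕ) = depth v := rfl
          omega
        rw [e1, e2]

open Finset in
lemma children_filter_empty (v : Vert d h) (hv : depth v = h) :
    univ.filter (fun j : Vert d h => IsParent v j) = ∅ := by
  ext j
  simp only [mem_filter, mem_univ, true_and, Finset.notMem_empty, iff_false]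
  intro hp
  have := hp.1
  have := depth_le j
  omega

open Finset in
lemma card_children_root (hd : 0 < d) (v : Vert d h) (h0 : depth v = 0) (hh : 0 < h) :
    (univ.filter (fun j : Vert d h => IsParent v j)).card = d := by
  have hvh : depth v < h := by omega
  have hb : (univ.filter (fun j : Vert d h => IsParent v j)).card
      = (univ : Finset (Fin d)).card := by
    refine card_bij' (fun j _ => j.1.2 ⟨depth v, hvh⟩)
      (fun s _ => child hd v hvh s (Or.inl h0)) ?_ ?_ ?_ ?_
    · intro a ha; exact mem_univ _
    · intro s _
      simp only [mem_filter, mem_univ, true_and]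
      exact isParent_child hd v hvh s _
    · intro j hj
      simp only [mem_filter, mem_univ, true_and] at hj
      exact (eq_child_of_isParent hd hj hvh _).symm
    · intro s _
      exact child_step hd v hvh s _
  rw [hb]
  simp

open Finset in
lemma card_children_mid (hd : 3 ≤ d) (v : Vert d h) (h1 : 1 ≤ depth v) (h2 : depth v < h) :
    (univ.filter (fun j : Vert d h => IsParent v j)).card = d - 1 := by
  have hd0 : 0 < d := by omega
  have hlast : ((univ : Finset (Fin d)).filter (fun s : Fin d => (s : ℕ) < d - 1)).card
      = d - 1 := by
    have : (univ : Finset (Fin d)).filter (fun s : Fin d => (s : ℕ) < d - 1)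
        = univ.erase ⟨d - 1, by omega⟩ := by
      ext s
      simp only [mem_filter, mem_univ, true_and, Finset.mem_erase, and_true]
      have := s.isLt
      constructor
      · intro hs he
        rw [he] at hs
        simp at hs
      · intro hne
        have hcoe : ((⟨d - 1, by omega⟩ : Fin d) : ℕ) = d - 1 := rfl
        rcases Nat.lt_or_ge (s : ℕ) (d - 1) with hlt | hge
        · exact hlt
        · exact absurd (Fin.ext (by omega : (s : ℕ) = ((⟨d - 1, by omega⟩ : Fin d) : ℕ))) hne
    rw [this, Finset.card_erase_of_mem (mem_univ _)]
    simp
  rw [← hlast]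
  refine card_bij' (fun j hj => j.1.2 ⟨depth v, h2⟩)
      (fun s hs => child hd0 v h2 s (Or.inr (by simpa using (mem_filter.mp hs).2))) ?_ ?_ ?_ ?_
  · intro j hj
    simp only [mem_filter, mem_univ, true_and] at hj ⊢
    exact step_lt_of_isParent hj h2 h1
  · intro s _
    simp only [mem_filter, mem_univ, true_and]
    exact isParent_child hd0 v h2 s _
  · intro j hj
    simp only [mem_filter, mem_univ, true_and] at hj
    exact (eq_child_of_isParent hd0 hj h2 _).symm
  · intro s _
    exact child_step hd0 v h2 s _

open Finset in
lemma delta_apply (i v : Vert d h) :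
    delta d h i v = (d : ℤ) * (if v = i then 1 else 0)
      - (if IsParent v i then 1 else 0) - (if IsParent i v then 1 else 0) := by
  have hsum : ∀ P : Vert d h → Prop, ∀ _ : DecidablePred P,
      (∑ j ∈ univ.filter P, (Pi.single j 1 : Vert d h → ℤ)) v
        = if P v then 1 else 0 := by
    intro P hP
    rw [Finset.sum_apply]
    have : ∀ j ∈ univ.filter P, (Pi.single j (1:ℤ) : Vert d h → ℤ) v
        = if v = j then (1:ℤ) else 0 := by
      intro j _
      rw [Pi.single_apply]
    rw [Finset.sum_congr rfl this, Finset.sum_ite_eq]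
    simp [mem_filter]
  show (d : ℤ) • (Pi.single i 1 : Vert d h → ℤ) v - _ - _ = _
  rw [hsum (fun j => IsParent j i) _, hsum (fun j => IsParent i j) _,
    Pi.single_apply, smul_eq_mul, mul_ite, mul_one, mul_zero]

open Finset in
lemma sum_smul_delta_apply (c : Vert d h → ℤ) (v : Vert d h) :
    (∑ i, c i • delta d h i) v
      = (d : ℤ) * c v - (∑ i ∈ univ.filter (fun i : Vert d h => IsParent i v), c i)
        - (∑ i ∈ univ.filter (fun i : Vert d h => IsParent v i), c i) := by
  rw [Finset.sum_apply]
  have step : ∀ i : Vert d h, (c i • delta d h i) v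
      = (if v = i then (d : ℤ) * c i else 0)
        - (if IsParent i v then c i else 0) - (if IsParent v i then c i else 0) := by
    intro i
    rw [Pi.smul_apply, delta_apply, smul_eq_mul]
    split_ifs <;> ring
  rw [Finset.sum_congr rfl (fun i _ => step i)]
  rw [Finset.sum_sub_distrib, Finset.sum_sub_distrib]
  congr 1
  congr 1
  · rw [Finset.sum_ite_eq]
    simp [mul_comm]
  · rw [← Finset.sum_filter]
  · rw [← Finset.sum_filter]

lemma theta_key (hd : 3 ≤ d) (n : ℕ) :
    (theta d n : ℤ) * ((d : ℤ) - 2) = ((d : ℤ) - 1) ^ n - 1 := by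
  have h1 : (d - 1) - 1 ∣ (d - 1) ^ n - 1 ^ n := Nat.sub_dvd_pow_sub_pow _ _ _
  rw [one_pow, show d - 1 - 1 = d - 2 by omega] at h1
  have h3 : 1 ≤ (d - 1) ^ n := Nat.one_le_pow _ _ (by omega)
  have h4 : theta d n * (d - 2) = (d - 1) ^ n - 1 := Nat.div_mul_cancel h1
  zify [h3, show 2 ≤ d by omega, show 1 ≤ d by omega] at h4
  exact h4

lemma dne : 3 ≤ d → ((d : ℤ) - 2) ≠ 0 := by
  intro hd; have : (3 : ℤ) ≤ (d : ℤ) := by exact_mod_cast hd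
  omega

lemma theta_one (hd : 3 ≤ d) : (theta d 1 : ℤ) = 1 := by
  have k := theta_key hd 1
  apply mul_right_cancel₀ (dne hd)
  rw [k]; ring

lemma theta_two (hd : 3 ≤ d) : (theta d 2 : ℤ) = d := by
  have k := theta_key hd 2
  apply mul_right_cancel₀ (dne hd)
  rw [k]; ring

lemma theta_rec (hd : 3 ≤ d) (n : ℕ) :
    (theta d (n + 2) : ℤ) = d * theta d (n + 1) - ((d : ℤ) - 1) * theta d n := by
  have k0 := theta_key hd n
  have k1 := theta_key hd (n + 1)
  have k2 := theta_key hd (n + 2)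
  apply mul_right_cancel₀ (dne hd)
  linear_combination k2 - (d : ℤ) * k1 + ((d : ℤ) - 1) * k0

lemma theta_diff (hd : 3 ≤ d) (n : ℕ) :
    (theta d (n + 1) : ℤ) - theta d n = ((d : ℤ) - 1) ^ n := by
  have k0 := theta_key hd n
  have k1 := theta_key hd (n + 1)
  apply mul_right_cancel₀ (dne hd)
  linear_combination k1 - k0

lemma theta_pos (hd : 3 ≤ d) {n : ℕ} (hn : 1 ≤ n) : 0 < (theta d n : ℤ) := by
  have k := theta_key hd n
  have hp : ((d : ℤ) - 1) ^ 1 ≤ ((d : ℤ) - 1) ^ n := by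
    apply pow_le_pow_right₀ _ hn
    have : (3 : ℤ) ≤ (d : ℤ) := by exact_mod_cast hd
    omega
  have h3 : (3 : ℤ) ≤ (d : ℤ) := by exact_mod_cast hd
  nlinarith

open Finset in
lemma key_identity (hd : 3 ≤ d) (hh : 1 ≤ h) (hd0 : 0 < d) :
    ∑ i : Vert d h, (theta d (h - depth i + 1) : ℤ) • delta d h i
      = fun v => (d : ℤ) * ((d : ℤ) - 1) ^ h * (if v = root d h hd0 then 1 else 0) := by
  funext v
  rw [show (∑ i : Vert d h, (theta d (h - depth i + 1) : ℤ) • delta d h i) v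
      = (∑ i : Vert d h, (fun i : Vert d h => (theta d (h - depth i + 1) : ℤ)) i • delta d h i) v
      from rfl]
  rw [sum_smul_delta_apply]
  by_cases h0 : depth v = 0
  · rw [parents_filter_empty v h0, Finset.sum_empty]
    have hch : (∑ i ∈ univ.filter (fun i : Vert d h => IsParent v i),
        (theta d (h - depth i + 1) : ℤ)) = (d : ℤ) * theta d h := by
      have hcongr : ∀ i ∈ univ.filter (fun i : Vert d h => IsParent v i),
          (theta d (h - depth i + 1) : ℤ) = (theta d h : ℤ) := by
        intro i hi
        simp only [mem_filter, mem_univ, true_and] at hi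
        have := hi.1
        have : h - depth i + 1 = h := by omega
        rw [this]
      rw [Finset.sum_congr rfl hcongr, Finset.sum_const,
        card_children_root hd0 v h0 (by omega)]
      simp [nsmul_eq_mul]
    rw [hch, if_pos ((eq_root_iff hd0 v).mpr h0)]
    have hcv : h - depth v + 1 = h + 1 := by omega
    rw [hcv]
    have := theta_diff hd h
    have h3 : (3 : ℤ) ≤ (d : ℤ) := by exact_mod_cast hd
    linear_combination (d : ℤ) * this
  · rw [if_neg (fun he => h0 ((eq_root_iff hd0 v).mp he)), mul_zero]
    have hdl := depth_le v
    rw [parents_filter_singleton hd0 v (by omega), Finset.sum_singleton]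
    have hpv : depth (parent hd0 v) = depth v - 1 := depth_parent hd0 v
    rw [hpv]
    by_cases hvh : depth v = h
    · rw [children_filter_empty v hvh, Finset.sum_empty]
      rw [show h - depth v + 1 = 1 by omega, show h - (depth v - 1) + 1 = 2 by omega,
        theta_one hd, theta_two hd]
      ring
    · have hch : (∑ i ∈ univ.filter (fun i : Vert d h => IsParent v i),
          (theta d (h - depth i + 1) : ℤ)) = ((d : ℤ) - 1) * theta d (h - depth v) := by
        have hcongr : ∀ i ∈ univ.filter (fun i : Vert d h => IsParent v i),
            (theta d (h - depth i + 1) : ℤ) = (theta d (h - depth v) : ℤ) := by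
          intro i hi
          simp only [mem_filter, mem_univ, true_and] at hi
          have := hi.1
          have : h - depth i + 1 = h - depth v := by omega
          rw [this]
        rw [Finset.sum_congr rfl hcongr, Finset.sum_const,
          card_children_mid hd v (by omega) (by omega)]
        have : ((d - 1 : ℕ) : ℤ) = (d : ℤ) - 1 := by
          push_cast [Nat.cast_sub (show 1 ≤ d by omega)]; ring
        rw [nsmul_eq_mul, this]
      rw [hch]
      rw [show h - (depth v - 1) + 1 = (h - depth v) + 2 by omega,
        show h - depth v + 1 = (h - depth v) + 1 by omega]
      linear_combination -(theta_rec hd (h - depth v))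

open Finset in
lemma forced_leaf (hd : 3 ≤ d) (hd0 : 0 < d) (c : Vert d h → ℤ)
    (hc : ∀ v : Vert d h, 1 ≤ depth v →
      (d : ℤ) * c v = c (parent hd0 v)
        + ∑ j ∈ univ.filter (fun j : Vert d h => IsParent v j), c j)
    (v : Vert d h) (hv : depth v = h) (hh : 1 ≤ h) :
    ∃ t : ℤ, c v = t * (theta d (h - depth v + 1) : ℤ)
      ∧ c (parent hd0 v) = t * (theta d (h - depth v + 2) : ℤ) := by
  have heq := hc v (by omega)
  rw [children_filter_empty v hv, Finset.sum_empty, add_zero] at heq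
  refine ⟨c v, ?_, ?_⟩
  · rw [show h - depth v + 1 = 1 by omega, theta_one hd, mul_one]
  · rw [show h - depth v + 2 = 2 by omega, theta_two hd]
    linarith

open Finset in
lemma forced (hd : 3 ≤ d) (hh : 1 ≤ h) (hd0 : 0 < d) (c : Vert d h → ℤ)
    (hc : ∀ v : Vert d h, 1 ≤ depth v →
      (d : ℤ) * c v = c (parent hd0 v)
        + ∑ j ∈ univ.filter (fun j : Vert d h => IsParent v j), c j) :
    ∀ k : ℕ, ∀ v : Vert d h, h - depth v ≤ k → 1 ≤ depth v →
      ∃ t : ℤ, c v = t * (theta d (h - depth v + 1) : ℤ)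
        ∧ c (parent hd0 v) = t * (theta d (h - depth v + 2) : ℤ) := by
  intro k
  induction k with
  | zero =>
    intro v hk h1
    have hv : depth v = h := by have := depth_le v; omega
    exact forced_leaf hd hd0 c hc v hv hh
  | succ k ih =>
    intro v hk h1
    by_cases hv : depth v = h
    · exact forced_leaf hd hd0 c hc v hv hh
    · have hvh : depth v < h := by have := depth_le v; omega
      have hcard := card_children_mid hd v h1 hvh
      have hne : (univ.filter (fun j : Vert d h => IsParent v j)).Nonempty := by
        rw [← Finset.card_pos, hcard]; omega
      have Hj : ∀ j ∈ univ.filter (fun j : Vert d h => IsParent v j),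
          ∃ t : ℤ, c j = t * (theta d (h - depth v) : ℤ)
            ∧ c v = t * (theta d (h - depth v + 1) : ℤ) := by
        intro j hj
        simp only [mem_filter, mem_univ, true_and] at hj
        have hdj : depth j = depth v + 1 := hj.1
        obtain ⟨t, ht1, ht2⟩ := ih j (by omega) (by omega)
        rw [show h - depth j + 1 = h - depth v by omega] at ht1
        rw [show h - depth j + 2 = h - depth v + 1 by omega] at ht2
        rw [← eq_parent_of_isParent hd0 hj] at ht2
        exact ⟨t, ht1, ht2⟩
      obtain ⟨j0, hj0⟩ := hne
      obtain ⟨t, ht1, ht2⟩ := Hj j0 hj0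
      refine ⟨t, ht2, ?_⟩
      have hsum : ∑ j ∈ univ.filter (fun j : Vert d h => IsParent v j), c j
          = ((d : ℤ) - 1) * (t * (theta d (h - depth v) : ℤ)) := by
        have hcongr : ∀ j ∈ univ.filter (fun j : Vert d h => IsParent v j),
            c j = t * (theta d (h - depth v) : ℤ) := by
          intro j hj
          obtain ⟨t', h1', h2'⟩ := Hj j hj
          have hpos := theta_pos hd (show 1 ≤ h - depth v + 1 by omega)
          have htt : t' = t := mul_right_cancel₀ (ne_of_gt hpos) (h2'.symm.trans ht2)
          rw [htt] at h1'
          exact h1'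
        rw [Finset.sum_congr rfl hcongr, Finset.sum_const, hcard, nsmul_eq_mul]
        rw [show ((d - 1 : ℕ) : ℤ) = (d : ℤ) - 1 by
          push_cast [Nat.cast_sub (show 1 ≤ d by omega)]; ring]
      have heq := hc v h1
      rw [hsum, ht2] at heq
      have hrec := theta_rec hd (h - depth v)
      linear_combination -heq - t * hrec

end SandpileTree


open SandpileTree Finset

theorem order_of_root_generator (d h : ℕ) (hd : 3 ≤ d) (hh : 1 ≤ h) :
    addOrderOf (xbar d h (root d h (by omega))) = d * (d - 1) ^ h := by
  have hd0 : 0 < d := by omega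
  show addOrderOf (xbar d h (root d h hd0)) = d * (d - 1) ^ h
  set r : Vert d h := root d h hd0 with hr
  set m : ℕ := d * (d - 1) ^ h with hmdef
  have hm : (m : ℤ) = (d : ℤ) * ((d : ℤ) - 1) ^ h := by
    rw [hmdef]
    push_cast [Nat.cast_sub (show 1 ≤ d by omega)]
    ring
  -- upper bound: m • x ∈ lat
  have hfun : (m : ℤ) • (Pi.single r 1 : Vert d h → ℤ)
      = ∑ i : Vert d h, (theta d (h - depth i + 1) : ℤ) • delta d h i := by
    rw [key_identity hd hh hd0]
    funext v
    rw [Pi.smul_apply, Pi.single_apply, smul_eq_mul, hm]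
  have h1 : m • xbar d h r = 0 := by
    rw [xbar, ← QuotientAddGroup.mk_nsmul]
    rw [QuotientAddGroup.eq_zero_iff]
    have : m • (Pi.single r 1 : Vert d h → ℤ) = (m : ℤ) • (Pi.single r 1 : Vert d h → ℤ) :=
      (natCast_zsmul _ _).symm
    rw [this, hfun]
    apply AddSubgroup.sum_mem
    intro i _
    exact AddSubgroup.zsmul_mem _ (AddSubgroup.subset_closure (Set.mem_range_self i)) _
  -- lower bound
  have h2 : ∀ n : ℕ, n • xbar d h r = 0 → m ∣ n := by
    intro n hn
    rw [xbar, ← QuotientAddGroup.mk_nsmul, QuotientAddGroup.eq_zero_iff] at hn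
    rw [show n • (Pi.single r 1 : Vert d h → ℤ) = (n : ℤ) • (Pi.single r 1 : Vert d h → ℤ)
      from (natCast_zsmul _ _).symm] at hn
    have hle : lat d h ≤ (Submodule.span ℤ (Set.range (delta d h))).toAddSubgroup :=
      (AddSubgroup.closure_le _).mpr Submodule.subset_span
    have hspan : (n : ℤ) • (Pi.single r 1 : Vert d h → ℤ)
        ∈ Submodule.span ℤ (Set.range (delta d h)) := hle hn
    obtain ⟨cc, hcc⟩ := (Submodule.mem_span_range_iff_exists_fun ℤ).mp hspan
    have E : ∀ v : Vert d h,
        (d : ℤ) * cc v - (∑ i ∈ univ.filter (fun i : Vert d h => IsParent i v), cc i)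
          - (∑ i ∈ univ.filter (fun i : Vert d h => IsParent v i), cc i)
        = (n : ℤ) * (if v = r then 1 else 0) := by
      intro v
      have := (sum_smul_delta_apply cc v).symm.trans (congrFun hcc v)
      rw [Pi.smul_apply, Pi.single_apply, smul_eq_mul] at this
      exact this
    have hc : ∀ v : Vert d h, 1 ≤ depth v →
        (d : ℤ) * cc v = cc (parent hd0 v)
          + ∑ j ∈ univ.filter (fun j : Vert d h => IsParent v j), cc j := by
      intro v hv
      have hE := E v
      rw [parents_filter_singleton hd0 v hv, Finset.sum_singleton] at hE
      rw [if_neg (fun he => by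
        have : depth v = 0 := (eq_root_iff hd0 v).mp he
        omega), mul_zero] at hE
      linarith
    -- root equation
    have hEr := E r
    rw [parents_filter_empty r rfl, Finset.sum_empty, if_pos rfl, mul_one, sub_zero] at hEr
    have hcard := card_children_root hd0 r rfl (by omega)
    have hne : (univ.filter (fun j : Vert d h => IsParent r j)).Nonempty := by
      rw [← Finset.card_pos, hcard]; omega
    have Hj : ∀ j ∈ univ.filter (fun j : Vert d h => IsParent r j),
        ∃ t : ℤ, cc j = t * (theta d h : ℤ) ∧ cc r = t * (theta d (h + 1) : ℤ) := by
      intro j hj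
      simp only [mem_filter, mem_univ, true_and] at hj
      have hdj : depth j = 1 := hj.1
      obtain ⟨t, ht1, ht2⟩ := forced hd hh hd0 cc hc h j (by omega) (by omega)
      rw [show h - depth j + 1 = h by omega] at ht1
      rw [show h - depth j + 2 = h + 1 by omega] at ht2
      rw [← eq_parent_of_isParent hd0 hj] at ht2
      exact ⟨t, ht1, ht2⟩
    obtain ⟨j0, hj0⟩ := hne
    obtain ⟨t, ht1, ht2⟩ := Hj j0 hj0
    have hsum : ∑ j ∈ univ.filter (fun j : Vert d h => IsParent r j), cc j
        = (d : ℤ) * (t * (theta d h : ℤ)) := by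
      have hcongr : ∀ j ∈ univ.filter (fun j : Vert d h => IsParent r j),
          cc j = t * (theta d h : ℤ) := by
        intro j hj
        obtain ⟨t', h1', h2'⟩ := Hj j hj
        have hpos := theta_pos hd (show 1 ≤ h + 1 by omega)
        have htt : t' = t := mul_right_cancel₀ (ne_of_gt hpos) (h2'.symm.trans ht2)
        rw [htt] at h1'
        exact h1'
      rw [Finset.sum_congr rfl hcongr, Finset.sum_const, hcard, nsmul_eq_mul]
    rw [hsum, ht2] at hEr
    have hdiff := theta_diff hd h
    have hdvd : (m : ℤ) ∣ (n : ℤ) := by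
      refine ⟨t, ?_⟩
      rw [hm]
      linear_combination -hEr + (d : ℤ) * t * hdiff
    exact_mod_cast hdvd
  exact Nat.dvd_antisymm (addOrderOf_dvd_of_nsmul_eq_zero h1) (h2 _ (addOrderOf_nsmul_eq_zero _))
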